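/- Equivalence of algebraic and sectional curvature: for every algebraic curvature tensor R on T, Φ⁺R is a sectional curvature tensor; for every sectional curvature tensor S on T, Φ⁻S is an algebraic curvature tensor; moreover Φ⁻(Φ⁺R) = R for every algebraic curvature tensor R and Φ⁺(Φ⁻S) = S for every sectional curvature tensor S, so Φ⁺ and Φ⁻ are mutually inverse linear isomorphisms between the space of algebraic curvature tensors and the space of sectional curvature tensors on T. -/
import Mathlib


open scoped BigOperators

variable {T : Type*} [NormedAddCommGroup T] [InnerProductSpace ℝ T] [FiniteDimensional ℝ T]

/-- A map `T → T → T → T → ℝ` that is linear in each of its four arguments. -/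
def IsQuadrilinear (R : T → T → T → T → ℝ) : Prop :=
  (∀ Y U V, IsLinearMap ℝ fun X => R X Y U V) ∧
  (∀ X U V, IsLinearMap ℝ fun Y => R X Y U V) ∧
  (∀ X Y V, IsLinearMap ℝ fun U => R X Y U V) ∧
  (∀ X Y U, IsLinearMap ℝ fun V => R X Y U V)

/-- An algebraic curvature tensor on `T`. -/
def IsAlgCurv (R : T → T → T → T → ℝ) : Prop :=
  IsQuadrilinear R ∧
  (∀ X Y U V : T, R X Y U V = -R Y X U V) ∧
  (∀ X Y U V : T, R X Y U V = -R X Y V U) ∧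
  (∀ X Y Z V : T, R X Y Z V + R Y Z X V + R Z X Y V = 0)

/-- A sectional curvature tensor on `T`. -/
def IsSecCurv (S : T → T → T → T → ℝ) : Prop :=
  IsQuadrilinear S ∧
  (∀ X Y U V : T, S X Y U V = S Y X U V) ∧
  (∀ X Y U V : T, S X Y U V = S X Y V U) ∧
  (∀ X V : T, S X X X V = 0)

/-- `(Φ⁺R)(X,Y;U,V) := −2·(R(X,U;Y,V) + R(X,V;Y,U))`. -/
noncomputable def PhiPlus (R : T → T → T → T → ℝ) : T → T → T → T → ℝ :=
  fun X Y U V => -2 * (R X U Y V + R X V Y U)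

/-- `(Φ⁻S)(X,Y;U,V) := −(1/6)·(S(X,U;Y,V) − S(X,V;Y,U))`. -/
noncomputable def PhiMinus (S : T → T → T → T → ℝ) : T → T → T → T → ℝ :=
  fun X Y U V => -(1 / 6) * (S X U Y V - S X V Y U)

set_option linter.unusedSectionVars false

section Aux

variable {R S : T → T → T → T → ℝ}

lemma qadd1 (hq : IsQuadrilinear R) (x x' y u v : T) :
    R (x + x') y u v = R x y u v + R x' y u v := (hq.1 y u v).map_add x x'

lemma qadd2 (hq : IsQuadrilinear R) (x y y' u v : T) :
    R x (y + y') u v = R x y u v + R x y' u v := (hq.2.1 x u v).map_add y y'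

lemma qadd3 (hq : IsQuadrilinear R) (x y u u' v : T) :
    R x y (u + u') v = R x y u v + R x y u' v := (hq.2.2.1 x y v).map_add u u'

lemma qadd4 (hq : IsQuadrilinear R) (x y u v v' : T) :
    R x y u (v + v') = R x y u v + R x y u v' := (hq.2.2.2 x y u).map_add v v'

lemma qneg1 (hq : IsQuadrilinear R) (x y u v : T) :
    R (-x) y u v = -R x y u v := (hq.1 y u v).map_neg x

lemma qneg2 (hq : IsQuadrilinear R) (x y u v : T) :
    R x (-y) u v = -R x y u v := (hq.2.1 x u v).map_neg y

lemma qneg3 (hq : IsQuadrilinear R) (x y u v : T) :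
    R x y (-u) v = -R x y u v := (hq.2.2.1 x y v).map_neg u

lemma qsmul1 (hq : IsQuadrilinear R) (c : ℝ) (x y u v : T) :
    R (c • x) y u v = c * R x y u v := (hq.1 y u v).map_smul c x

lemma qsmul2 (hq : IsQuadrilinear R) (c : ℝ) (x y u v : T) :
    R x (c • y) u v = c * R x y u v := (hq.2.1 x u v).map_smul c y

lemma qsmul3 (hq : IsQuadrilinear R) (c : ℝ) (x y u v : T) :
    R x y (c • u) v = c * R x y u v := (hq.2.2.1 x y v).map_smul c u

lemma qsmul4 (hq : IsQuadrilinear R) (c : ℝ) (x y u v : T) :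
    R x y u (c • v) = c * R x y u v := (hq.2.2.2 x y u).map_smul c v

/-- Cyclic identity in the first three slots for a sectional curvature tensor. -/
lemma secE (hS : IsSecCurv S) (x y z w : T) :
    S x y z w + S y z x w + S z x y w = 0 := by
  obtain ⟨hq, hs12, hs34, h0⟩ := hS
  -- polarization of `S x x x w = 0`
  have P : ∀ x y w : T,
      S x x y w + 2 * S x y x w + 2 * S x y y w + S y y x w = 0 := by
    intro x y w
    have e := h0 (x + y) w
    rw [qadd1 hq, qadd2 hq, qadd2 hq, qadd3 hq, qadd3 hq, qadd3 hq, qadd3 hq] at e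
    have s1 := hs12 y x x w
    have s2 := hs12 y x y w
    have h0x := h0 x w
    have h0y := h0 y w
    linarith
  have A : ∀ x y w : T, 2 * S x y y w + S y y x w = 0 := by
    intro x y w
    have p1 := P x y w
    have p2 := P x (-y) w
    rw [qneg2 hq, qneg3 hq, qneg2 hq, qneg3 hq, qneg1 hq, qneg2 hq] at p2
    linarith
  -- polarize A in the variable y
  have a1 := A x (y + z) w
  rw [qadd2 hq, qadd3 hq, qadd3 hq, qadd1 hq, qadd2 hq, qadd2 hq] at a1
  have a2 := A x y w
  have a3 := A x z w
  have s1 := hs12 z y x w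
  have s2 := hs12 x z y w
  have s3 := hs12 z x y w
  linarith

/-- The pair-exchange symmetry for a sectional curvature tensor. -/
lemma secPair (hS : IsSecCurv S) (a b c d : T) : S a b c d = S c d a b := by
  have step : ∀ a b c d : T,
      S a b c d - S c d a b = S a d b c - S b c a d := by
    intro a b c d
    have e1 := secE hS a b c d
    have e2 := secE hS c d a b
    have s1 := hS.2.1 d a c b
    have s2 := hS.2.2.1 a d c b
    have s3 := hS.2.2.1 a c d b
    have s4 := hS.2.1 c a b d
    linarith
  have t1 := step a b c d
  have t2 := step d a b c
  have s1 := hS.2.1 d a b c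
  have s2 := hS.2.1 b c d a
  have s2' := hS.2.2.1 b c a d
  have s3 := hS.2.1 d c a b
  have s4 := hS.2.2.1 a b d c
  linarith

/-- The pair-exchange symmetry for an algebraic curvature tensor. -/
lemma algPair (hR : IsAlgCurv R) (a b c d : T) : R a b c d = R c d a b := by
  obtain ⟨hq, hA1, hA2, hB⟩ := hR
  -- prove `R z x y w = R y w z x` with z=a, x=b, y=c, w=d
  have key : ∀ z x y w : T, R z x y w = R y w z x := by
    intro z x y w
    have b1 := hB x y z w
    have b2 := hB y z w x
    have b3 := hB z w x y
    have b4 := hB w x y z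
    have e1 := hA2 y z w x
    have e2 := hA2 z w y x
    have e3 := hA1 w y z x
    have e4 := hA2 w x z y
    have e5 := hA2 x z w y
    have e6 := hA1 x z y w
    have e7 := hA2 x y w z
    have e8 := hA2 y w x z
    linarith
  exact key a b c d

end Aux

/-- equivalence of algebraic and sectional curvature tensors. -/
theorem phiPlus_phiMinus_equiv :
    (∀ R : T → T → T → T → ℝ, IsAlgCurv R → IsSecCurv (PhiPlus R)) ∧
    (∀ S : T → T → T → T → ℝ, IsSecCurv S → IsAlgCurv (PhiMinus S)) ∧
    (∀ R : T → T → T → T → ℝ, IsAlgCurv R → PhiMinus (PhiPlus R) = R) ∧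
    (∀ S : T → T → T → T → ℝ, IsSecCurv S → PhiPlus (PhiMinus S) = S) := by
  refine ⟨?_, ?_, ?_, ?_⟩
  · -- Φ⁺ of an algebraic curvature tensor is a sectional curvature tensor
    intro R hR
    obtain ⟨hq, hA1, hA2, hB⟩ := hR
    refine ⟨⟨?_, ?_, ?_, ?_⟩, ?_, ?_, ?_⟩
    · intro Y U V
      refine ⟨fun x y => ?_, fun c x => ?_⟩
      · simp only [PhiPlus, qadd1 hq]; ring
      · simp only [PhiPlus, qsmul1 hq, smul_eq_mul]; ring
    · intro X U V
      refine ⟨fun x y => ?_, fun c x => ?_⟩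
      · simp only [PhiPlus, qadd3 hq]; ring
      · simp only [PhiPlus, qsmul3 hq, smul_eq_mul]; ring
    · intro X Y V
      refine ⟨fun x y => ?_, fun c x => ?_⟩
      · simp only [PhiPlus, qadd2 hq, qadd4 hq]; ring
      · simp only [PhiPlus, qsmul2 hq, qsmul4 hq, smul_eq_mul]; ring
    · intro X Y U
      refine ⟨fun x y => ?_, fun c x => ?_⟩
      · simp only [PhiPlus, qadd2 hq, qadd4 hq]; ring
      · simp only [PhiPlus, qsmul2 hq, qsmul4 hq, smul_eq_mul]; ring
    · intro X Y U V
      simp only [PhiPlus]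
      have p1 := algPair ⟨hq, hA1, hA2, hB⟩ Y U X V
      have p2 := algPair ⟨hq, hA1, hA2, hB⟩ Y V X U
      linarith
    · intro X Y U V
      simp only [PhiPlus]; ring
    · intro X V
      simp only [PhiPlus]
      have h1 := hA1 X X X V
      have h2 := hA2 X V X X
      linarith
  · -- Φ⁻ of a sectional curvature tensor is an algebraic curvature tensor
    intro S hS
    obtain ⟨hq, hs12, hs34, h0⟩ := hS
    have hS' : IsSecCurv S := ⟨hq, hs12, hs34, h0⟩
    refine ⟨⟨?_, ?_, ?_, ?_⟩, ?_, ?_, ?_⟩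
    · intro Y U V
      refine ⟨fun x y => ?_, fun c x => ?_⟩
      · simp only [PhiMinus, qadd1 hq]; ring
      · simp only [PhiMinus, qsmul1 hq, smul_eq_mul]; ring
    · intro X U V
      refine ⟨fun x y => ?_, fun c x => ?_⟩
      · simp only [PhiMinus, qadd3 hq]; ring
      · simp only [PhiMinus, qsmul3 hq, smul_eq_mul]; ring
    · intro X Y V
      refine ⟨fun x y => ?_, fun c x => ?_⟩
      · simp only [PhiMinus, qadd2 hq, qadd4 hq]; ring
      · simp only [PhiMinus, qsmul2 hq, qsmul4 hq, smul_eq_mul]; ring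
    · intro X Y U
      refine ⟨fun x y => ?_, fun c x => ?_⟩
      · simp only [PhiMinus, qadd2 hq, qadd4 hq]; ring
      · simp only [PhiMinus, qsmul2 hq, qsmul4 hq, smul_eq_mul]; ring
    · intro X Y U V
      simp only [PhiMinus]
      have e1 := secE hS' X U Y V
      have e2 := secE hS' X V Y U
      have s1 := hs12 U Y X V
      have s2 := hs12 Y X U V
      have s3 := hs12 V Y X U
      have s4 := hs12 Y X V U
      have s5 := hs34 X Y V U
      linarith
    · intro X Y U V
      simp only [PhiMinus]; ring
    · intro X Y Z V
      simp only [PhiMinus]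
      have e1 := secE hS' X Z Y V
      have e2 := secE hS' Y Z X V  -- gives S Y Z X V + S Z X Y V + S X Y Z V = 0
      have p1 := secPair hS' X V Y Z
      have p2 := secPair hS' Y V Z X
      have p3 := secPair hS' Z V X Y
      have s1 := hs12 Z Y X V
      have s2 := hs12 Y X Z V
      linarith
  · -- Φ⁻ ∘ Φ⁺ = id on algebraic curvature tensors
    intro R hR
    funext X Y U V
    obtain ⟨hq, hA1, hA2, hB⟩ := hR
    simp only [PhiMinus, PhiPlus]
    have h1 := hA2 X Y V U
    have h2 := hA2 X U V Y
    have p := algPair ⟨hq, hA1, hA2, hB⟩ X V U Y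
    have b := hB X U Y V
    have h3 := hA1 Y X U V
    linarith
  · -- Φ⁺ ∘ Φ⁻ = id on sectional curvature tensors
    intro S hS
    funext X Y U V
    simp only [PhiPlus, PhiMinus]
    have e := secE hS X U V Y
    have s1 := hS.2.1 V X U Y
    have p := secPair hS U V X Y
    have s2 := hS.2.2.1 X Y V U
    linarith
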